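/- Let α, β > −1. Then every real zero x of the Jacobi polynomial P_k^{(α,β)} satisfies A < x < B, where s = α+β+1, q = α−β, r = 2k+α+β+1, R = √((r²−q²+2s+1)(r²−s²)), A = −(R + q(s+1))/(r² + 2s + 1), and B = (R − q(s+1))/(r² + 2s + 1). -/

import Mathlib

open Finset

/-- The Jacobi polynomial `P_k^{(α,β)}` as a real function:
`P_k^{(α,β)}(x) = ∑_{i=0}^{k} [(∏_{j=1}^{k−i}(α+i+j))/(k−i)!] · [(∏_{j=1}^{i}(β+k−i+j))/i!]
  · ((x−1)/2)^i · ((x+1)/2)^{k−i}`. -/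
noncomputable def jacobi (k : ℕ) (α β : ℝ) (x : ℝ) : ℝ :=
  ∑ i ∈ Finset.range (k + 1),
    ((∏ j ∈ Finset.range (k - i), (α + (i : ℝ) + (j : ℝ) + 1)) /
      (Nat.factorial (k - i))) *
    ((∏ j ∈ Finset.range i, (β + ((k - i : ℕ) : ℝ) + (j : ℝ) + 1)) /
      (Nat.factorial i)) *
    ((x - 1) / 2) ^ i * ((x + 1) / 2) ^ (k - i)

namespace JZ

noncomputable def C (k : ℕ) (α β : ℝ) (i : ℕ) : ℝ :=
  ((∏ j ∈ Finset.range (k - i), (α + (i : ℝ) + (j : ℝ) + 1)) /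
      (Nat.factorial (k - i))) *
    ((∏ j ∈ Finset.range i, (β + ((k - i : ℕ) : ℝ) + (j : ℝ) + 1)) /
      (Nat.factorial i))

noncomputable def T1 (i j : ℕ) (x : ℝ) : ℝ :=
  (i : ℝ) * ((x - 1) / 2) ^ (i - 1) * (1 / 2) * ((x + 1) / 2) ^ j +
    ((x - 1) / 2) ^ i * ((j : ℝ) * ((x + 1) / 2) ^ (j - 1) * (1 / 2))

noncomputable def T2 (i j : ℕ) (x : ℝ) : ℝ :=
  (((i : ℝ) * (((i - 1 : ℕ) : ℝ) * ((x - 1) / 2) ^ (i - 1 - 1) * (1 / 2))) * (1 / 2)) * ((x + 1) / 2) ^ j +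
    ((i : ℝ) * ((x - 1) / 2) ^ (i - 1) * (1 / 2)) * ((j : ℝ) * ((x + 1) / 2) ^ (j - 1) * (1 / 2)) +
  (((i : ℝ) * ((x - 1) / 2) ^ (i - 1) * (1 / 2)) * ((j : ℝ) * ((x + 1) / 2) ^ (j - 1) * (1 / 2)) +
    ((x - 1) / 2) ^ i * (((j : ℝ) * (((j - 1 : ℕ) : ℝ) * ((x + 1) / 2) ^ (j - 1 - 1) * (1 / 2))) * (1 / 2)))

noncomputable def P1 (k : ℕ) (α β : ℝ) (x : ℝ) : ℝ :=
  ∑ i ∈ Finset.range (k + 1), C k α β i * T1 i (k - i) x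

noncomputable def P2 (k : ℕ) (α β : ℝ) (x : ℝ) : ℝ :=
  ∑ i ∈ Finset.range (k + 1), C k α β i * T2 i (k - i) x

lemma jacobi_eq (k : ℕ) (α β : ℝ) (x : ℝ) :
    jacobi k α β x = ∑ i ∈ Finset.range (k + 1), C k α β i * (((x - 1) / 2) ^ i * ((x + 1) / 2) ^ (k - i)) := by
  unfold jacobi C
  exact Finset.sum_congr rfl fun i _ => by ring

lemma hasDerivAt_X (x : ℝ) : HasDerivAt (fun y : ℝ => (y - 1) / 2) (1 / 2) x := by
  simpa using ((hasDerivAt_id x).sub_const 1).div_const 2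

lemma hasDerivAt_Y (x : ℝ) : HasDerivAt (fun y : ℝ => (y + 1) / 2) (1 / 2) x := by
  simpa using ((hasDerivAt_id x).add_const 1).div_const 2

lemma hasDerivAt_Xpow (i : ℕ) (x : ℝ) :
    HasDerivAt (fun y : ℝ => ((y - 1) / 2) ^ i) ((i : ℝ) * ((x - 1) / 2) ^ (i - 1) * (1 / 2)) x :=
  (hasDerivAt_X x).pow i

lemma hasDerivAt_Ypow (j : ℕ) (x : ℝ) :
    HasDerivAt (fun y : ℝ => ((y + 1) / 2) ^ j) ((j : ℝ) * ((x + 1) / 2) ^ (j - 1) * (1 / 2)) x :=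
  (hasDerivAt_Y x).pow j

lemma hasDerivAt_term (k : ℕ) (α β : ℝ) (i : ℕ) (x : ℝ) :
    HasDerivAt (fun y : ℝ => C k α β i * (((y - 1) / 2) ^ i * ((y + 1) / 2) ^ (k - i)))
      (C k α β i * T1 i (k - i) x) x :=
  ((hasDerivAt_Xpow i x).mul (hasDerivAt_Ypow (k - i) x)).const_mul _

lemma hasDerivAt_jacobi (k : ℕ) (α β : ℝ) (x : ℝ) :
    HasDerivAt (jacobi k α β) (P1 k α β x) x := by
  have : HasDerivAt (fun y : ℝ => ∑ i ∈ Finset.range (k + 1),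
      C k α β i * (((y - 1) / 2) ^ i * ((y + 1) / 2) ^ (k - i))) (P1 k α β x) x :=
    HasDerivAt.fun_sum fun i _ => hasDerivAt_term k α β i x
  exact this.congr_of_eventuallyEq (Filter.Eventually.of_forall fun y => (jacobi_eq k α β y))

lemma hasDerivAt_T1 (i j : ℕ) (x : ℝ) : HasDerivAt (T1 i j) (T2 i j x) x := by
  apply HasDerivAt.add
  · exact (((hasDerivAt_Xpow (i-1) x).const_mul (i:ℝ)).mul_const (1/2)).mul (hasDerivAt_Ypow j x)
  · exact (hasDerivAt_Xpow i x).mul (((hasDerivAt_Ypow (j-1) x).const_mul (j:ℝ)).mul_const (1/2))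

lemma hasDerivAt_P1 (k : ℕ) (α β : ℝ) (x : ℝ) :
    HasDerivAt (P1 k α β) (P2 k α β x) x :=
  HasDerivAt.fun_sum fun i _ => (hasDerivAt_T1 i (k - i) x).const_mul _

end JZ

namespace JZ
lemma C_succ (k : ℕ) (α β : ℝ) (i : ℕ) (hik : i < k) :
    ((i : ℝ) + 1) * ((i : ℝ) + 1 + α) * C k α β (i + 1)
      = ((k - i : ℕ) : ℝ) * (((k - i : ℕ) : ℝ) + β) * C k α β i := by
  obtain ⟨j, rfl⟩ : ∃ j, k = i + (j + 1) := ⟨k - i - 1, by omega⟩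
  unfold C
  rw [show i + (j + 1) - (i + 1) = j by omega, show i + (j + 1) - i = j + 1 by omega]
  have ha : ∏ m ∈ Finset.range (j + 1), (α + (i : ℝ) + (m : ℝ) + 1)
      = (∏ m ∈ Finset.range j, (α + ((i + 1 : ℕ) : ℝ) + (m : ℝ) + 1)) * (α + (i : ℝ) + 1) := by
    rw [Finset.prod_range_succ' (fun m => (α + (i : ℝ) + (m : ℝ) + 1)) j]
    push_cast
    exact congrArg₂ _ (Finset.prod_congr rfl fun m _ => by ring) (by ring)
  have hb : ∏ m ∈ Finset.range (i + 1), (β + ((j : ℕ) : ℝ) + (m : ℝ) + 1)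
      = (∏ m ∈ Finset.range i, (β + ((j + 1 : ℕ) : ℝ) + (m : ℝ) + 1)) * (β + (j : ℝ) + 1) := by
    rw [Finset.prod_range_succ' (fun m => (β + (j : ℝ) + (m : ℝ) + 1)) i]
    push_cast
    exact congrArg₂ _ (Finset.prod_congr rfl fun m _ => by ring) (by ring)
  rw [ha, hb, Nat.factorial_succ (i), Nat.factorial_succ j]
  have hfi : ((Nat.factorial i : ℝ)) ≠ 0 := Nat.cast_ne_zero.2 (Nat.factorial_ne_zero i)
  have hfj : ((Nat.factorial j : ℝ)) ≠ 0 := Nat.cast_ne_zero.2 (Nat.factorial_ne_zero j)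
  push_cast
  field_simp
  ring

lemma term_ode (i j : ℕ) (α β c x : ℝ) :
    ((x-1)/2) * ((x+1)/2) * ((1 - x^2) * (c * T2 i j x)
      + (β - α - (α+β+2)*x) * (c * T1 i j x)
      + ((i+j : ℕ) : ℝ) * (((i+j : ℕ) : ℝ) + α + β + 1) * (c * (((x-1)/2)^i * ((x+1)/2)^j)))
    = -((i:ℝ) * ((i:ℝ)+α)) * c * (((x-1)/2)^i * ((x+1)/2)^(j+2))
      + ((i:ℝ)*((i:ℝ)+α) + (j:ℝ)*((j:ℝ)+β)) * c * (((x-1)/2)^(i+1) * ((x+1)/2)^(j+1))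
      - ((j:ℝ)*((j:ℝ)+β)) * c * (((x-1)/2)^(i+2) * ((x+1)/2)^j) := by
  unfold T1 T2
  rcases i with (_|_|i) <;> rcases j with (_|_|j) <;>
    simp only [Nat.zero_sub, Nat.sub_self, Nat.add_sub_cancel, Nat.succ_sub_one, Nat.cast_zero,
      Nat.cast_one, Nat.cast_add, Nat.cast_ofNat, pow_zero] <;> push_cast <;> ring


lemma master (k : ℕ) (α β : ℝ) (x : ℝ) :
    ((x-1)/2) * ((x+1)/2) * ((1 - x^2) * P2 k α β x
      + (β - α - (α+β+2)*x) * P1 k α β x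
      + (k : ℝ) * ((k : ℝ) + α + β + 1) * jacobi k α β x) = 0 := by
  rw [jacobi_eq]
  unfold P1 P2
  rw [Finset.mul_sum, Finset.mul_sum, Finset.mul_sum, ← Finset.sum_add_distrib,
    ← Finset.sum_add_distrib, Finset.mul_sum]
  have step1 : ∀ i ∈ Finset.range (k+1),
      ((x-1)/2) * ((x+1)/2) * ((1 - x^2) * (C k α β i * T2 i (k-i) x)
        + (β - α - (α+β+2)*x) * (C k α β i * T1 i (k-i) x)
        + (k : ℝ) * ((k : ℝ) + α + β + 1) * (C k α β i * (((x-1)/2)^i * ((x+1)/2)^(k-i))))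
      = (-((i:ℝ) * ((i:ℝ)+α)) * C k α β i * (((x-1)/2)^i * ((x+1)/2)^(k-i+2))
        + ((i:ℝ)*((i:ℝ)+α) + ((k-i:ℕ):ℝ)*(((k-i:ℕ):ℝ)+β)) * C k α β i * (((x-1)/2)^(i+1) * ((x+1)/2)^(k-i+1)))
        - (((k-i:ℕ):ℝ)*(((k-i:ℕ):ℝ)+β)) * C k α β i * (((x-1)/2)^(i+2) * ((x+1)/2)^(k-i)) := by
    intro i hi
    have hik : i ≤ k := by simpa using Nat.lt_succ_iff.mp (Finset.mem_range.mp hi)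
    obtain ⟨j, rfl⟩ : ∃ j, k = i + j := ⟨k - i, by omega⟩
    rw [show i + j - i = j by omega]
    exact term_ode i j α β (C (i+j) α β i) x
  rw [Finset.sum_congr rfl step1]
  rw [Finset.sum_sub_distrib, Finset.sum_add_distrib]
  have ha : (∑ i ∈ Finset.range (k+1), -((i:ℝ) * ((i:ℝ)+α)) * C k α β i * (((x-1)/2)^i * ((x+1)/2)^(k-i+2)))
      = ∑ i ∈ Finset.range (k+1), -(((k-i:ℕ):ℝ) * (((k-i:ℕ):ℝ)+β)) * C k α β i * (((x-1)/2)^(i+1) * ((x+1)/2)^(k-i+1)) := by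
    rw [Finset.sum_range_succ' (fun i => -((i:ℝ) * ((i:ℝ)+α)) * C k α β i * (((x-1)/2)^i * ((x+1)/2)^(k-i+2))) k,
        Finset.sum_range_succ (fun i => -(((k-i:ℕ):ℝ) * (((k-i:ℕ):ℝ)+β)) * C k α β i * (((x-1)/2)^(i+1) * ((x+1)/2)^(k-i+1))) k]
    simp only [Nat.cast_zero, Nat.sub_self, neg_zero, zero_mul, mul_zero, add_zero, zero_add,
      zero_sub, neg_mul, neg_neg, neg_zero]
    refine Finset.sum_congr rfl fun i hik => ?_
    have hik' : i < k := Finset.mem_range.mp hik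
    rw [show k - (i + 1) + 2 = k - i + 1 by omega]
    have hcs := C_succ k α β i hik'
    push_cast
    linear_combination (-((((x:ℝ) - 1) / 2) ^ (i+1) * (((x:ℝ) + 1) / 2) ^ (k-i+1))) * hcs
  have hc : (∑ i ∈ Finset.range (k+1), ((k-i:ℕ):ℝ) * (((k-i:ℕ):ℝ)+β) * C k α β i * (((x-1)/2)^(i+2) * ((x+1)/2)^(k-i)))
      = ∑ i ∈ Finset.range (k+1), ((i:ℝ) * ((i:ℝ)+α)) * C k α β i * (((x-1)/2)^(i+1) * ((x+1)/2)^(k-i+1)) := by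
    rw [Finset.sum_range_succ (fun i => ((k-i:ℕ):ℝ) * (((k-i:ℕ):ℝ)+β) * C k α β i * (((x-1)/2)^(i+2) * ((x+1)/2)^(k-i))) k,
        Finset.sum_range_succ' (fun i => ((i:ℝ) * ((i:ℝ)+α)) * C k α β i * (((x-1)/2)^(i+1) * ((x+1)/2)^(k-i+1))) k]
    simp only [Nat.cast_zero, Nat.sub_self, neg_zero, zero_mul, mul_zero, add_zero, zero_add,
      zero_sub, neg_mul, neg_neg, neg_zero]
    refine Finset.sum_congr rfl fun i hik => ?_
    have hik' : i < k := Finset.mem_range.mp hik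
    rw [show k - (i + 1) + 1 = k - i by omega]
    have hcs := C_succ k α β i hik'
    push_cast
    linear_combination (-((((x:ℝ) - 1) / 2) ^ (i+2) * (((x:ℝ) + 1) / 2) ^ (k-i))) * hcs
  rw [ha, hc, ← Finset.sum_add_distrib, ← Finset.sum_sub_distrib]
  refine Finset.sum_eq_zero fun i hi => ?_
  ring

lemma ode (k : ℕ) (α β : ℝ) (x : ℝ) (hx1 : x ≠ 1) (hx2 : x ≠ -1) :
    (1 - x^2) * P2 k α β x + (β - α - (α+β+2)*x) * P1 k α β x
      + (k : ℝ) * ((k : ℝ) + α + β + 1) * jacobi k α β x = 0 := by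
  have h := master k α β x
  have hX : (x-1)/2 ≠ 0 := by
    intro hc; apply hx1; field_simp at hc; linarith
  have hY : (x+1)/2 ≠ 0 := by
    intro hc; apply hx2; field_simp at hc; linarith
  exact (mul_eq_zero.mp h).resolve_left (mul_ne_zero hX hY)

lemma C_pos (k : ℕ) (α β : ℝ) (hα : -1 < α) (hβ : -1 < β) (i : ℕ) :
    0 < C k α β i := by
  unfold C
  have h1 : (0:ℝ) < ∏ j ∈ Finset.range (k - i), (α + (i : ℝ) + (j : ℝ) + 1) :=
    Finset.prod_pos fun j _ => by
      have := Nat.cast_nonneg (α := ℝ) i; have := Nat.cast_nonneg (α := ℝ) j; linarith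
  have h2 : (0:ℝ) < ∏ j ∈ Finset.range i, (β + ((k - i : ℕ) : ℝ) + (j : ℝ) + 1) :=
    Finset.prod_pos fun j _ => by
      have := Nat.cast_nonneg (α := ℝ) (k - i); have := Nat.cast_nonneg (α := ℝ) j; linarith
  have h3 : (0:ℝ) < (Nat.factorial (k-i) : ℝ) := by positivity
  have h4 : (0:ℝ) < (Nat.factorial i : ℝ) := by positivity
  positivity

lemma jacobi_pos (k : ℕ) (α β : ℝ) (hα : -1 < α) (hβ : -1 < β) (x : ℝ) (hx : 1 ≤ x) :
    0 < jacobi k α β x := by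
  rw [jacobi_eq]
  apply Finset.sum_pos'
  · intro i _
    have := C_pos k α β hα hβ i
    have hX : (0:ℝ) ≤ (x-1)/2 := by linarith
    have hY : (0:ℝ) ≤ (x+1)/2 := by linarith
    positivity
  · refine ⟨0, Finset.mem_range.mpr (by omega), ?_⟩
    have := C_pos k α β hα hβ 0
    have hY : (0:ℝ) < (x+1)/2 := by linarith
    positivity

lemma C_swap (k : ℕ) (α β : ℝ) (j : ℕ) (hj : j ≤ k) :
    C k α β (k - j) = C k β α j := by
  unfold C
  rw [show k - (k - j) = j by omega]
  ring

lemma jacobi_reflect (k : ℕ) (α β : ℝ) (x : ℝ) :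
    jacobi k α β (-x) = (-1)^k * jacobi k β α x := by
  rw [jacobi_eq, jacobi_eq, Finset.mul_sum]
  rw [← Finset.sum_range_reflect]
  refine Finset.sum_congr rfl fun j hj => ?_
  have hjk : j ≤ k := by
    have := Finset.mem_range.mp hj; omega
  rw [show k + 1 - 1 - j = k - j by omega]
  rw [C_swap k α β j hjk]
  rw [show k - (k - j) = j by omega]
  have e1 : ((-x - 1)/2 : ℝ) = -((x+1)/2) := by ring
  have e2 : ((-x + 1)/2 : ℝ) = -((x-1)/2) := by ring
  rw [e1, e2, neg_pow ((x+1)/2), neg_pow ((x-1)/2)]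
  have : (-1 : ℝ)^(k-j) * (-1:ℝ)^j = (-1:ℝ)^k := by
    rw [← pow_add, Nat.sub_add_cancel hjk]
  rw [← this]; ring


set_option maxHeartbeats 2000000 in
lemma key_hm (α β w B c2 κ kr : ℝ) (hα : -1 < α) (hβ : -1 < β)
    (hk1 : 1 ≤ kr) (hκ : κ = kr*(kr+α+β+1))
    (hc2n : 0 ≤ c2) (hc2sq : c2^2 = κ*(κ+(α+1)*(β+1)))
    (hB : B = (4*c2 - (α-β)*(α+β+2))/((α+β+2)^2+4*κ))
    (hBw : B ≤ w) (hw1 : w < 1) :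
    2*c2*(1-w) < (α+1)*((α+β+1)*w+(α-β)+1) - 2*κ*(1-w) := by
  have ha : (0:ℝ) < α+1 := by linarith
  have hb : (0:ℝ) < β+1 := by linarith
  have hκpos : 0 < κ := by rw [hκ]; nlinarith
  have hD : (0:ℝ) < (α+β+2)^2+4*κ := by nlinarith
  have hfac : ((α+1)*(α+β+2)+2*κ)^2 - 4*c2^2 = (α+1)^2*((α+β+2)^2+4*κ) := by
    linear_combination (-4)*hc2sq
  have hP : 0 < (α+1)*(α+β+2)+2*κ := by nlinarith
  have hX2 : 0 < (α+1)*(α+β+2)+2*κ - 2*c2 := by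
    by_contra hX2n
    push_neg at hX2n
    have h2 : (α+1)*(α+β+2)+2*κ ≤ 2*c2 := by linarith
    have h3 := mul_self_le_mul_self hP.le h2
    nlinarith [mul_pos hD (mul_pos ha ha)]
  have hBD : B * ((α+β+2)^2+4*κ) = 4*c2 - (α-β)*(α+β+2) := by
    rw [hB]; field_simp
  have hm0D : ((α+1)*((α+β+1)*B+(α-β)+1) - 2*(κ+c2)*(1-B)) * ((α+β+2)^2+4*κ)
      = 2*(α+1)*((α+1)*(α+β+2)+2*κ-2*c2) := by
    linear_combination ((α+1)*(α+β+1) + 2*(κ+c2))*hBD + 8*hc2sq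
  have hm0 : 0 < (α+1)*((α+β+1)*B+(α-β)+1) - 2*(κ+c2)*(1-B) := by nlinarith
  have hκge : α+β+2 ≤ κ := by nlinarith [(kr-1)*(kr+α+β+2)]
  have hslope : 0 < (α+1)*(α+β+1) + 2*(κ+c2) := by nlinarith
  nlinarith [mul_nonneg (sub_nonneg.mpr hBw) hslope.le]

lemma key_mpos (c2 w m : ℝ) (hc2 : 0 < c2) (hw1 : w < 1)
    (hm : 2*c2*(1-w) < m) : 0 < m := by nlinarith

lemma key_dpos (α β w S₀ m c2 κ : ℝ) (ha : 0 < α+1) (hκ : 0 < κ)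
    (hc2n : 0 ≤ c2) (hc2sq : c2^2 = κ*(κ+(α+1)*(β+1)))
    (hS : S₀ = (α+β+1)*w+(α-β)+1) (hmdef : m = (α+1)*S₀ - 2*κ*(1-w))
    (hw1 : w < 1) (hm : 2*c2*(1-w) < m) :
    0 < S₀^2 - 4*κ*(1-w^2) := by
  have hΔid : (α+1)^2*(S₀^2 - 4*κ*(1-w^2)) = m^2 - 4*κ*(κ+(α+1)*(β+1)-(α+1))*(1-w)^2 := by
    rw [hmdef, hS]; ring
  have h0 : 0 ≤ 2*c2*(1-w) := by nlinarith
  have h1 : (2*c2*(1-w))^2 < m^2 := by nlinarith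
  nlinarith [mul_pos (mul_pos hκ ha) (mul_pos (show (0:ℝ) < 1-w by linarith) (show (0:ℝ) < 1-w by linarith))]

lemma key_psi0 (w S₀ e d E F κ s q : ℝ) (hw1 : w - 1 ≠ 0)
    (he2 : e^2 = S₀^2 - 4*κ*(1-w^2))
    (hd : d = (S₀ + e)/(2*(w-1)))
    (hE : E = d^2 - s*d - κ) (hF : F = d^2 + (1+q)*d + κ)
    (hS : S₀ = s*w + q + 1) :
    E*w - F = 0 := by
  have h4 : (E*w - F) * (4*(w-1)) = e^2 - (S₀^2 - 4*κ*(1-w^2)) := by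
    rw [hE, hF, hd, hS]
    field_simp
    ring
  rw [he2] at h4
  simp only [sub_self] at h4
  rcases mul_eq_zero.mp h4 with h | h
  · exact h
  · exact absurd h (by intro hc; apply hw1; linarith)

lemma key_psi1 (α β w S₀ e d E F κ m : ℝ) (ha : 0 < α+1) (hκ : 0 < κ)
    (hw1 : w < 1) (hepos : 0 < e)
    (hd : d = (S₀ + e)/(2*(w-1)))
    (hE : E = d^2 - (α+β+1)*d - κ) (hF : F = d^2 + (1+(α-β))*d + κ)
    (hmdef : m = (α+1)*S₀ - 2*κ*(1-w)) (hmpos : 0 < m) :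
    0 < E - F := by
  have hne : w - 1 ≠ 0 := by intro h; linarith [h]
  have hne2 : (1:ℝ) - w ≠ 0 := by intro h; linarith [h]
  have h1 : E - F = ((α+1)*(S₀+e) - 2*κ*(1-w))/(1-w) := by
    rw [hE, hF, hd]
    field_simp
    ring
  rw [h1]
  apply div_pos _ (by linarith)
  nlinarith [mul_pos ha hepos]

lemma key_psipos (E F w y : ℝ) (h0 : E*w - F = 0) (h1 : 0 < E - F)
    (hwy : w < y) (hy1 : y < 1) : 0 < E*y - F := by nlinarith

set_option maxHeartbeats 1000000 in
open Filter Set in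
lemma main_right (k : ℕ) (hk : 1 ≤ k) (α β : ℝ) (hα : -1 < α) (hβ : -1 < β)
    (B : ℝ)
    (hB : B = (4 * Real.sqrt (((k:ℝ)*((k:ℝ)+α+β+1)) * ((k:ℝ)*((k:ℝ)+α+β+1) + (α+1)*(β+1)))
        - (α-β)*(α+β+2)) / ((α+β+2)^2 + 4*((k:ℝ)*((k:ℝ)+α+β+1))))
    (x₀ : ℝ) (hx₀ : jacobi k α β x₀ = 0) : x₀ < B := by
  by_contra hcon
  push_neg at hcon   -- B ≤ x₀
  have ha : (0:ℝ) < α + 1 := by linarith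
  have hb : (0:ℝ) < β + 1 := by linarith
  have hk1 : (1:ℝ) ≤ (k:ℝ) := by exact_mod_cast hk
  set κ : ℝ := (k:ℝ)*((k:ℝ)+α+β+1) with hκ_def
  have hκ : 0 < κ := by
    have h1 : (0:ℝ) < (k:ℝ)+α+β+1 := by linarith
    have hk0 : (0:ℝ) < (k:ℝ) := by linarith
    exact mul_pos hk0 h1
  set c2 : ℝ := Real.sqrt (κ * (κ + (α+1)*(β+1))) with hc2_def
  have hc2sq : c2^2 = κ * (κ + (α+1)*(β+1)) := by
    rw [hc2_def]; rw [Real.sq_sqrt]; positivity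
  have hc2 : 0 < c2 := by
    rw [hc2_def]; apply Real.sqrt_pos.mpr; positivity
  have hBc : B = (4*c2 - (α-β)*(α+β+2)) / ((α+β+2)^2+4*κ) := hB
  -- x₀ < 1
  have hcont : Continuous (jacobi k α β) := by
    rw [continuous_iff_continuousAt]
    exact fun y => (hasDerivAt_jacobi k α β y).differentiableAt.continuousAt
  have hP1c : Continuous (P1 k α β) := by
    rw [continuous_iff_continuousAt]
    exact fun y => (hasDerivAt_P1 k α β y).differentiableAt.continuousAt
  have hx01 : x₀ < 1 := by
    by_contra h
    push_neg at h
    exact absurd hx₀ (ne_of_gt (jacobi_pos k α β hα hβ x₀ h))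
  -- the largest zero
  set Z : Set ℝ := {y : ℝ | jacobi k α β y = 0} ∩ Set.Icc x₀ 1 with hZ_def
  have hZcl : IsClosed Z := (isClosed_eq hcont continuous_const).inter isClosed_Icc
  have hZne : Z.Nonempty := ⟨x₀, hx₀, le_refl _, le_of_lt hx01⟩
  have hZbdd : BddAbove Z := ⟨1, fun y hy => hy.2.2⟩
  set w : ℝ := sSup Z with hw_def
  have hwZ : w ∈ Z := hZcl.csSup_mem hZne hZbdd
  have hpz : jacobi k α β w = 0 := hwZ.1
  have hx0w : x₀ ≤ w := hwZ.2.1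
  have hw1 : w < 1 :=
    lt_of_le_of_ne hwZ.2.2 (fun h => absurd hpz (by rw [h]; exact ne_of_gt (jacobi_pos k α β hα hβ 1 le_rfl)))
  have hwm1 : -1 < w := by
    by_contra h
    push_neg at h
    have h2 : (1:ℝ) ≤ -w := by linarith
    have h3 := jacobi_pos k β α hβ hα (-w) h2
    have h4 : jacobi k α β w = (-1)^k * jacobi k β α (-w) := by
      have := jacobi_reflect k α β (-w)
      simpa using this
    rw [hpz] at h4
    have h5 : ((-1:ℝ))^k ≠ 0 := by
      intro hc
      have := pow_eq_zero_iff (n := k) (by omega) |>.mp hc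
      norm_num at this
    exact absurd (eq_comm.mp h4) (mul_ne_zero h5 (ne_of_gt h3))
  have hBw : B ≤ w := le_trans hcon hx0w
  have hpos : ∀ y, w < y → y ≤ 1 → 0 < jacobi k α β y := by
    intro y hy1 hy2
    rcases eq_or_lt_of_le hy2 with h | hy2'
    · rw [h]; exact jacobi_pos k α β hα hβ 1 le_rfl
    · by_contra hle
      push_neg at hle
      have hne : jacobi k α β y ≠ 0 := by
        intro h0
        have hyZ : y ∈ Z := ⟨h0, by constructor <;> linarith⟩
        have : y ≤ w := le_csSup hZbdd hyZ
        linarith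
      have hlt : jacobi k α β y < 0 := lt_of_le_of_ne hle hne
      have hIVT := intermediate_value_Ioo (le_of_lt hy2') hcont.continuousOn
      obtain ⟨z, hz, hz0⟩ := hIVT (Set.mem_Ioo.mpr ⟨hlt, jacobi_pos k α β hα hβ 1 le_rfl⟩)
      have hzZ : z ∈ Z := ⟨hz0, by constructor <;> [linarith [hz.1]; linarith [hz.2]]⟩
      have : z ≤ w := le_csSup hZbdd hzZ
      linarith [hz.1]
  have hp'0 : 0 ≤ P1 k α β w := by
    have hder := hasDerivAt_jacobi k α β w
    rw [hasDerivAt_iff_tendsto_slope] at hder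
    have hd2 : Filter.Tendsto (slope (jacobi k α β) w) (nhdsWithin w (Set.Ioi w)) (nhds (P1 k α β w)) :=
      hder.mono_left (nhdsWithin_mono w (fun y hy => ne_of_gt hy))
    apply ge_of_tendsto hd2
    filter_upwards [Ioo_mem_nhdsGT_of_mem (Set.mem_Ico.mpr ⟨le_refl w, hw1⟩)] with y hy
    have := hpos y hy.1 (le_of_lt hy.2)
    rw [slope_def_field, hpz]
    have hyw : 0 < y - w := by linarith [hy.1]
    exact div_nonneg (by linarith) hyw.le
  -- algebraic setup
  set S₀ : ℝ := (α+β+1)*w + (α-β) + 1 with hS0_def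
  set m : ℝ := (α+1)*S₀ - 2*κ*(1-w) with hm_def
  have hm : 2*c2*(1-w) < m := by
    rw [hm_def, hS0_def]
    exact key_hm α β w B c2 κ (k:ℝ) hα hβ hk1 hκ_def hc2.le hc2sq hBc hBw hw1
  have hmpos : 0 < m := key_mpos c2 w m hc2 hw1 hm
  set Δ : ℝ := S₀^2 - 4*κ*(1-w^2) with hΔ_def
  have hΔpos : 0 < Δ := by
    rw [hΔ_def]
    exact key_dpos α β w S₀ m c2 κ ha hκ hc2.le hc2sq hS0_def hm_def hw1 hm
  set e : ℝ := Real.sqrt Δ with he_def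
  have he2 : e^2 = Δ := by rw [he_def]; exact Real.sq_sqrt (le_of_lt hΔpos)
  have hepos : 0 < e := by rw [he_def]; exact Real.sqrt_pos.mpr hΔpos
  set d : ℝ := (S₀ + e)/(2*(w-1)) with hd_def
  set E : ℝ := d^2 - (α+β+1)*d - κ with hE_def
  set F : ℝ := d^2 + (1+(α-β))*d + κ with hF_def
  have hw1' : w - 1 ≠ 0 := by intro h; linarith [h]
  have hΨ0 : E*w - F = 0 :=
    key_psi0 w S₀ e d E F κ (α+β+1) (α-β) hw1' (he2.trans hΔ_def) hd_def hE_def hF_def hS0_def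
  have hΨ1 : 0 < E - F :=
    key_psi1 α β w S₀ e d E F κ m ha hκ hw1 hepos hd_def hE_def hF_def hm_def hmpos
  -- the Sonin-type function
  set W : ℝ → ℝ := fun y => (1-y)^(α+1) * (1+y)^(β-d) * ((1+y) * P1 k α β y + d * jacobi k α β y)
    with hW_def
  have hWder : ∀ y, -1 < y → y < 1 → HasDerivAt W
      ((1-y)^α * (1+y)^(β-d-1) * (jacobi k α β y * (E*y - F))) y := by
    intro y hy1 hy2
    have h1y : (0:ℝ) < 1 - y := by linarith
    have h2y : (0:ℝ) < 1 + y := by linarith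
    have f1 := (((hasDerivAt_id y).const_sub 1)).rpow_const (p := α+1) (Or.inl (ne_of_gt h1y))
    have f2 := (((hasDerivAt_id y).const_add 1)).rpow_const (p := β-d) (Or.inl (ne_of_gt h2y))
    have f3 := (((hasDerivAt_id y).const_add 1).mul (hasDerivAt_P1 k α β y)).add
        ((hasDerivAt_jacobi k α β y).const_mul d)
    have htot := (f1.mul f2).mul f3
    simp only [id_eq] at htot
    rw [hW_def]
    convert htot using 1
    case e'_4 => rfl
    case e'_5 => rfl
    case e'_8 => rfl
    have hODE := ode k α β y (by linarith) (by linarith)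
    have e1 : (1-y)^(α+1-1) = (1-y)^α := by norm_num
    have e2 : (1-y)^(α+1) = (1-y)^α * (1-y) := Real.rpow_add_one (ne_of_gt h1y) α
    have e3 : (1+y)^(β-d) = (1+y)^(β-d-1) * (1+y) := by
      rw [show β-d = (β-d-1)+1 by ring, Real.rpow_add_one (ne_of_gt h2y)]
      norm_num
    simp only [Pi.mul_apply, Pi.add_apply]
    rw [e1, e2, e3, hE_def, hF_def]
    linear_combination (-((1-y)^α * (1+y)^(β-d-1) * (1+y))) * hODE
  have hWmono : StrictMonoOn W (Set.Ico w 1) := by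
    apply strictMonoOn_of_deriv_pos (convex_Ico w 1)
    · intro y hy
      have hy1 : -1 < y := by have := hy.1; linarith
      exact ((hWder y hy1 hy.2).differentiableAt).continuousAt.continuousWithinAt
    · intro y hy
      rw [interior_Ico] at hy
      obtain ⟨hyw', hy2'⟩ := hy
      have hy1 : -1 < y := by linarith
      rw [(hWder y hy1 hy2').deriv]
      have hj := hpos y hyw' (le_of_lt hy2')
      have hψ := key_psipos E F w y hΨ0 hΨ1 hyw' hy2'
      have r1 : (0:ℝ) < (1-y)^α := Real.rpow_pos_of_pos (by linarith) _
      have r2 : (0:ℝ) < (1+y)^(β-d-1) := Real.rpow_pos_of_pos (by linarith) _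
      positivity
  have hW0 : 0 ≤ W w := by
    rw [hW_def]
    simp only [hpz, mul_zero, add_zero]
    have r1 : (0:ℝ) ≤ (1-w)^(α+1) := Real.rpow_nonneg (by linarith) _
    have r2 : (0:ℝ) ≤ (1+w)^(β-d) := Real.rpow_nonneg (by linarith) _
    have r3 : (0:ℝ) ≤ (1+w) * P1 k α β w := mul_nonneg (by linarith) hp'0
    positivity
  have hWtend : Tendsto W (nhdsWithin 1 (Set.Iio 1)) (nhds 0) := by
    have t0 : Tendsto (fun y : ℝ => 1 - y) (nhdsWithin 1 (Set.Iio 1)) (nhds 0) := by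
      have hc : Continuous (fun y : ℝ => 1 - y) := by continuity
      have : Tendsto (fun y : ℝ => 1 - y) (nhds 1) (nhds 0) := by
        simpa using hc.tendsto (1:ℝ)
      exact this.mono_left nhdsWithin_le_nhds
    have t1 : Tendsto (fun y : ℝ => (1-y)^(α+1)) (nhdsWithin 1 (Set.Iio 1)) (nhds 0) := by
      have hc0 : ContinuousAt (fun z : ℝ => z ^ (α+1)) 0 :=
        Real.continuousAt_rpow_const 0 (α+1) (Or.inr (by linarith))
      have := hc0.tendsto.comp t0
      simpa [Function.comp_def, Real.zero_rpow (by linarith : α+1 ≠ 0)] using this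
    have t2 : Tendsto (fun y : ℝ => (1+y)^(β-d) * ((1+y) * P1 k α β y + d * jacobi k α β y))
        (nhdsWithin 1 (Set.Iio 1)) (nhds (((1:ℝ)+1)^(β-d) * (((1:ℝ)+1) * P1 k α β 1 + d * jacobi k α β 1))) := by
      apply Tendsto.mono_left _ nhdsWithin_le_nhds
      apply Tendsto.mul
      · have hb2 : ContinuousAt (fun y : ℝ => (1+y)^(β-d)) 1 := by
          apply ContinuousAt.rpow_const
          · exact (continuous_const.add continuous_id).continuousAt
          · left; norm_num
        have := hb2.tendsto
        simpa using this
      · have : ContinuousAt (fun y : ℝ => (1+y) * P1 k α β y + d * jacobi k α β y) 1 := by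
          exact (((continuous_const.add continuous_id).mul hP1c).add
            (continuous_const.mul hcont)).continuousAt
        have := this.tendsto
        simpa using this
    have := t1.mul t2
    rw [hW_def]
    simpa [mul_assoc] using this
  set x₁ : ℝ := (w+1)/2 with hx1_def
  have hx₁a : w < x₁ := by rw [hx1_def]; linarith
  have hx₁b : x₁ < 1 := by rw [hx1_def]; linarith
  have hWx₁ : 0 < W x₁ := by
    have := hWmono (Set.mem_Ico.mpr ⟨le_refl _, hw1⟩) (Set.mem_Ico.mpr ⟨le_of_lt hx₁a, hx₁b⟩) hx₁a
    linarith
  have hev : ∀ᶠ y in nhdsWithin 1 (Set.Iio 1), W x₁ ≤ W y := by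
    filter_upwards [Ico_mem_nhdsLT_of_mem (Set.mem_Ioc.mpr ⟨hx₁b, le_refl (1:ℝ)⟩)] with y hy
    rcases eq_or_lt_of_le hy.1 with h | h
    · rw [← h]
    · exact le_of_lt (hWmono (Set.mem_Ico.mpr ⟨le_of_lt hx₁a, hx₁b⟩)
        (Set.mem_Ico.mpr ⟨le_trans (le_of_lt hx₁a) hy.1, hy.2⟩) h)
  have : W x₁ ≤ 0 := ge_of_tendsto hWtend hev
  linarith

theorem jacobi_zeros_in_interval'
    (k : ℕ) (hk : 1 ≤ k) (α β : ℝ) (hα : -1 < α) (hβ : -1 < β)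
    (s q r R : ℝ)
    (hs : s = α + β + 1) (hq : q = α - β) (hr : r = 2 * (k : ℝ) + α + β + 1)
    (hR : R = Real.sqrt ((r ^ 2 - q ^ 2 + 2 * s + 1) * (r ^ 2 - s ^ 2)))
    (A : ℝ) (hA : A = -(R + q * (s + 1)) / (r ^ 2 + 2 * s + 1))
    (B : ℝ) (hB : B = (R - q * (s + 1)) / (r ^ 2 + 2 * s + 1)) :
    ∀ x : ℝ, jacobi k α β x = 0 → A < x ∧ x < B := by
  intro x hx
  have hk1 : (1:ℝ) ≤ (k:ℝ) := by exact_mod_cast hk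
  have hsqrt16 : Real.sqrt 16 = 4 := by
    rw [show (16:ℝ) = 4^2 by norm_num, Real.sqrt_sq (by norm_num)]
  have hR4 : R = 4 * Real.sqrt (((k:ℝ)*((k:ℝ)+α+β+1)) * ((k:ℝ)*((k:ℝ)+α+β+1) + (α+1)*(β+1))) := by
    rw [hR, show (r ^ 2 - q ^ 2 + 2 * s + 1) * (r ^ 2 - s ^ 2)
      = 16 * ((((k:ℝ)*((k:ℝ)+α+β+1)) * ((k:ℝ)*((k:ℝ)+α+β+1) + (α+1)*(β+1)))) by
        rw [hs, hq, hr]; ring]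
    rw [Real.sqrt_mul (by norm_num : (0:ℝ) ≤ 16), hsqrt16]
  constructor
  · -- A < x via reflection
    have hzero : jacobi k β α (-x) = 0 := by
      rw [jacobi_reflect k β α x, hx, mul_zero]
    have hBA : -A = (4 * Real.sqrt (((k:ℝ)*((k:ℝ)+β+α+1)) * ((k:ℝ)*((k:ℝ)+β+α+1) + (β+1)*(α+1)))
        - (β-α)*(β+α+2)) / ((β+α+2)^2 + 4*((k:ℝ)*((k:ℝ)+β+α+1))) := by
      rw [hA, hR4, show ((k:ℝ)*((k:ℝ)+β+α+1)) * ((k:ℝ)*((k:ℝ)+β+α+1) + (β+1)*(α+1))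
        = (((k:ℝ)*((k:ℝ)+α+β+1)) * ((k:ℝ)*((k:ℝ)+α+β+1) + (α+1)*(β+1))) by ring]
      rw [hq, hs, hr]
      have hD : ((β+α+2)^2 + 4*((k:ℝ)*((k:ℝ)+β+α+1))) ≠ 0 := by
        have h1 : (0:ℝ) < β+α+2 := by linarith
        have h2 : (0:ℝ) < (k:ℝ) := by linarith
        have h3 : (0:ℝ) < (k:ℝ)+β+α+1 := by linarith
        positivity
      have hD2 : ((2 * (k:ℝ) + α + β + 1) ^ 2 + 2 * (α + β + 1) + 1) ≠ 0 := by
        rw [show ((2 * (k:ℝ) + α + β + 1) ^ 2 + 2 * (α + β + 1) + 1)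
          = ((β+α+2)^2 + 4*((k:ℝ)*((k:ℝ)+β+α+1))) by ring]
        exact hD
      field_simp
      ring
    have := main_right k hk β α hβ hα (-A) hBA (-x) hzero
    linarith
  · apply main_right k hk α β hα hβ B ?_ x hx
    rw [hB, hR4, hq, hs, hr]
    have hD2 : ((2 * (k:ℝ) + α + β + 1) ^ 2 + 2 * (α + β + 1) + 1) ≠ 0 := by
      have h2 : (0:ℝ) < (k:ℝ) := by linarith
      have h3 : (0:ℝ) < (k:ℝ)+α+β+1 := by linarith
      have h4 : (0:ℝ) < α+β+2 := by linarith
      nlinarith [mul_pos h2 h3, sq_nonneg (α+β+2)]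
    have hD : ((α+β+2)^2 + 4*((k:ℝ)*((k:ℝ)+α+β+1))) ≠ 0 := by
      rw [show ((α+β+2)^2 + 4*((k:ℝ)*((k:ℝ)+α+β+1)))
        = ((2 * (k:ℝ) + α + β + 1) ^ 2 + 2 * (α + β + 1) + 1) by ring]
      exact hD2
    field_simp
    ring
end JZ

/-- Every real zero `x` of `P_k^{(α,β)}` satisfies `A < x < B`. -/
theorem jacobi_zeros_in_interval
    (k : ℕ) (hk : 1 ≤ k) (α β : ℝ) (hα : -1 < α) (hβ : -1 < β)
    (s q r R : ℝ)
    (hs : s = α + β + 1) (hq : q = α - β) (hr : r = 2 * (k : ℝ) + α + β + 1)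
    (hR : R = Real.sqrt ((r ^ 2 - q ^ 2 + 2 * s + 1) * (r ^ 2 - s ^ 2)))
    (A : ℝ) (hA : A = -(R + q * (s + 1)) / (r ^ 2 + 2 * s + 1))
    (B : ℝ) (hB : B = (R - q * (s + 1)) / (r ^ 2 + 2 * s + 1)) :
    ∀ x : ℝ, jacobi k α β x = 0 → A < x ∧ x < B :=
  JZ.jacobi_zeros_in_interval' k hk α β hα hβ s q r R hs hq hr hR A hA B hB
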